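/- Let q, r ≥ 2 be integers and 0 < α < 1. (a) If h₁ : T_q → ℝ is P₁-harmonic (i.e. ∑_y p₁(x,y)h₁(y) = h₁(x) for every x ∈ T_q), then the function h on DL(q,r) defined by h(x₁x₂) = h₁(x₁) is P_α-harmonic. (b) If h₂ : T_r → ℝ is P₂-harmonic, then the function h on DL(q,r) defined by h(x₁x₂) = h₂(x₂) is P_α-harmonic. -/
import Mathlib


open scoped Classical

noncomputable section

namespace LampDL

variable {X : Type*}

/-- `n`-step transition probabilities of the Markov chain with transition matrix `p`. -/
def matpow (p : X → X → ℝ) : ℕ → X → X → ℝ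
  | 0 => fun x y => if x = y then 1 else 0
  | n + 1 => fun x y => ∑' z, p x z * matpow p n z y

/-- A (countable) stochastic transition matrix. -/
def IsStochastic (p : X → X → ℝ) : Prop :=
  (∀ x y, 0 ≤ p x y) ∧ ∀ x, HasSum (p x) 1

/-- Irreducibility: some power has positive entry for every pair. -/
def IsIrreducible (p : X → X → ℝ) : Prop := ∀ x y, ∃ n, 0 < matpow p n x y

/-- `hitBefore p A y n x` is the probability that the chain started at `x` avoids `A`
at all times `< n` and is at `y` at time `n`.  For `y ∈ A`, summing over `n` yields
`F^A(x,y) = Pr_x[s^y ≤ s^A, s^y < ∞]`. -/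
def hitBefore (p : X → X → ℝ) (A : Set X) (y : X) : ℕ → X → ℝ
  | 0 => fun x => if x = y then 1 else 0
  | n + 1 => fun x => if x ∈ A then 0 else ∑' z, p x z * hitBefore p A y n z

/-- `F^A(x,y) = Pr_x[s^y ≤ s^A, s^y < ∞]` (for `y ∈ A`). -/
def FA (p : X → X → ℝ) (A : Set X) (x y : X) : ℝ := ∑' n, hitBefore p A y n x

/-- `F(x,y) = Pr_x[s^y < ∞]`, the probability of ever hitting `y` from `x`. -/
def Fhit (p : X → X → ℝ) (x y : X) : ℝ := FA p {y} x y

/-- A function is `P`-harmonic if `∑_y p(x,y) h(y) = h(x)` for every `x`. -/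
def IsHarmonic (p : X → X → ℝ) (h : X → ℝ) : Prop := ∀ x, ∑' y, p x y * h y = h x

/-- A minimal harmonic function (w.r.t. the reference point `o`). -/
def IsMinimalHarmonic (p : X → X → ℝ) (o : X) (h : X → ℝ) : Prop :=
  IsHarmonic p h ∧ (∀ x, 0 ≤ h x) ∧ h o = 1 ∧
    ∀ h₁ : X → ℝ, IsHarmonic p h₁ → (∀ x, 0 ≤ h₁ x) → (∀ x, h₁ x ≤ h x) →
      ∃ c : ℝ, ∀ x, h₁ x = c * h x

/-- Vertices of the homogeneous tree `T_q`, modelled as pairs `(σ, k)` where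
`σ : ℤ → ZMod q` is finitely supported with `σ n = 0` for `n > 0`. -/
structure TV (q : ℕ) where
  σ : ℤ → ZMod q
  k : ℤ
  fin : (Function.support σ).Finite
  upz : ∀ n : ℤ, 0 < n → σ n = 0

lemma fin_aux {q : ℕ} (g : ℤ → ZMod q) (hg : (Function.support g).Finite)
    (f : ℤ → ℤ) (hf : Function.Injective f) :
    (Function.support fun n => if n ≤ 0 then g (f n) else 0).Finite := by
  refine Set.Finite.subset (hg.preimage hf.injOn) ?_
  intro n hn
  simp only [Function.mem_support] at hn
  by_cases hle : n ≤ 0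
  · simp only [hle, if_true] at hn
    simpa [Set.mem_preimage, Function.mem_support] using hn
  · simp [hle] at hn

/-- The predecessor `x⁻` of a vertex of `T_q` (w.r.t. the reference end `ω`). -/
def pred {q : ℕ} (x : TV q) : TV q where
  σ := fun n => if n ≤ 0 then x.σ (n - 1) else 0
  k := x.k - 1
  fin := fin_aux x.σ x.fin (fun n => n - 1) sub_left_injective
  upz := fun n hn => by simp [not_le.mpr hn]

/-- The vertex on the geodesic `ω o` at Busemann level `k` (zero configuration). -/
def rootAt (q : ℕ) (k : ℤ) : TV q := ⟨fun _ => 0, k, by simp, fun _ _ => rfl⟩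

/-- The Diestel–Leader graph `DL(q,r)`. -/
def DL (q r : ℕ) := {x : TV q × TV r // x.1.k + x.2.k = 0}

/-- The root `o = o₁o₂` of `DL(q,r)`. -/
def oDL (q r : ℕ) : DL q r := ⟨(rootAt q 0, rootAt r 0), by simp [rootAt]⟩

/-- The projected transition matrix `P₁ = P_{1,α}` on `T_q`. -/
def p1 (q : ℕ) (α : ℝ) (x y : TV q) : ℝ :=
  if pred y = x then α / (q : ℝ) else if y = pred x then 1 - α else 0

/-- The projected transition matrix `P₂ = P_{2,1-α}` on `T_r`. -/
def p2 (r : ℕ) (α : ℝ) (x y : TV r) : ℝ :=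
  if y = pred x then α else if pred y = x then (1 - α) / (r : ℝ) else 0

/-- The transition matrix `P_α` on `DL(q,r)`. -/
def pDL (q r : ℕ) (α : ℝ) (x y : DL q r) : ℝ :=
  if pred y.val.1 = x.val.1 ∧ y.val.2 = pred x.val.2 then α / (q : ℝ)
  else if y.val.1 = pred x.val.1 ∧ pred y.val.2 = x.val.2 then (1 - α) / (r : ℝ)
  else 0


/-- Ends `ξ ∈ ∂*T_q`: configurations whose support is bounded below. -/
def BoundedBelowSupp (q : ℕ) (ξ : ℤ → ZMod q) : Prop := ∃ N : ℤ, ∀ n < N, ξ n = 0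

/-- Configurations whose support is bounded above. -/
def BoundedAboveSupp (q : ℕ) (ξ : ℤ → ZMod q) : Prop := ∃ N : ℤ, ∀ n > N, ξ n = 0

/-- The confluent level `b(x,ξ)` (level of `x ⋏ ξ` w.r.t. `ω`) of a vertex `x ∈ T_q`
and an end `ξ ∈ ∂*T_q`. -/
def bconf (q : ℕ) (x : TV q) (ξ : ℤ → ZMod q) : ℤ :=
  sInf ({m : ℤ | m ≤ x.k ∧ ξ (m + 1) ≠ x.σ (m + 1 - x.k)} ∪ {x.k})

/-- `F₁⁻ = F₁(x,x⁻) = min {1, (1-α)/α}`. -/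
def F1m (α : ℝ) : ℝ := min 1 ((1 - α) / α)
/-- `F₁⁺ = F₁(x⁻,x) = min {1/q, α/((1-α)q)}`. -/
def F1p (q : ℕ) (α : ℝ) : ℝ := min (1 / (q : ℝ)) (α / ((1 - α) * (q : ℝ)))
/-- `F₂⁻ = min {1, α/(1-α)}`. -/
def F2m (α : ℝ) : ℝ := min 1 (α / (1 - α))
/-- `F₂⁺ = min {1/r, (1-α)/(αr)}`. -/
def F2p (r : ℕ) (α : ℝ) : ℝ := min (1 / (r : ℝ)) ((1 - α) / (α * (r : ℝ)))

/-- The Martin kernel `K₁(·,ξ₁)` on `T_q`, `ξ₁ ∈ ∂*T_q`. -/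
def K1 (q : ℕ) (α : ℝ) (x : TV q) (ξ : ℤ → ZMod q) : ℝ :=
  F1m α ^ x.k * (F1m α * F1p q α) ^ (bconf q (rootAt q 0) ξ - bconf q x ξ)

/-- The Martin kernel `K₂(·,ξ₂)` on `T_r`, `ξ₂ ∈ ∂*T_r`. -/
def K2 (r : ℕ) (α : ℝ) (x : TV r) (ξ : ℤ → ZMod r) : ℝ :=
  F2m α ^ x.k * (F2m α * F2p r α) ^ (bconf r (rootAt r 0) ξ - bconf r x ξ)

/-- The vertex `u_m = (σ_m, m)` on the geodesic from `ω` to the end encoded by `ξ`. -/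
def rayVertex (q : ℕ) (ξ : ℤ → ZMod q) (hξ : BoundedBelowSupp q ξ) (m : ℤ) : TV q where
  σ := fun n => if n ≤ 0 then ξ (m + n) else 0
  k := m
  fin := by
    obtain ⟨N, hN⟩ := hξ
    apply Set.Finite.subset (Set.finite_Icc (N - m) 0)
    intro n hn
    simp only [Function.mem_support] at hn
    by_cases hle : n ≤ 0
    · simp only [hle, if_true] at hn
      have : ¬ (m + n < N) := fun hc => hn (hN _ hc)
      exact Set.mem_Icc.mpr ⟨by omega, hle⟩
    · simp [hle] at hn
  upz := fun n hn => by simp [not_le.mpr hn]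

/-- The rooted subtree `S₁ = S₁^{(n)} ⊆ T_q` with root `a₁ = (0,-n)`. -/
def S1 (q : ℕ) (n : ℕ) : Set (TV q) :=
  {x | -(n : ℤ) ≤ x.k ∧ x.k ≤ (n : ℤ) ∧ pred^[(x.k + (n : ℤ)).toNat] x = rootAt q (-(n : ℤ))}

/-- The set of leaves `∂*S₁` of `S₁^{(n)}`. -/
def S1leaves (q : ℕ) (n : ℕ) : Set (TV q) := {x | x ∈ S1 q n ∧ x.k = (n : ℤ)}

/-- The boundary `∂S₁ = {a₁} ∪ ∂*S₁` of `S₁^{(n)}`. -/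
def S1bd (q : ℕ) (n : ℕ) : Set (TV q) := insert (rootAt q (-(n : ℤ))) (S1leaves q n)

/-- The horocyclic product `S = S^{(n)}` of `S₁` and `S₂` inside `DL(q,r)`. -/
def Sdl (q r : ℕ) (n : ℕ) : Set (DL q r) := {x | x.val.1 ∈ S1 q n ∧ x.val.2 ∈ S1 r n}

/-- The boundary `∂S = (∂*S₁ × {a₂}) ∪ ({a₁} × ∂*S₂)` of `S^{(n)}`. -/
def Sbd (q r : ℕ) (n : ℕ) : Set (DL q r) :=
  {x | (x.val.1 ∈ S1leaves q n ∧ x.val.2 = rootAt r (-(n : ℤ))) ∨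
       (x.val.1 = rootAt q (-(n : ℤ)) ∧ x.val.2 ∈ S1leaves r n)}

/-- A leaf `y₁ ∈ ∂*S₁` together with `a₂` gives a vertex `y₁a₂` of `DL(q,r)`. -/
def liftLeaf1 (q r : ℕ) (n : ℕ) (y : TV q) (hy : y ∈ S1leaves q n) : DL q r :=
  ⟨(y, rootAt r (-(n : ℤ))), by have h2 := hy.2; show y.k + (-(n : ℤ)) = 0; omega⟩

/-- The vertex `a₁y₂` of `DL(q,r)` for a leaf `y₂ ∈ ∂*S₂`. -/
def liftLeaf2 (q r : ℕ) (n : ℕ) (y : TV r) (hy : y ∈ S1leaves r n) : DL q r :=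
  ⟨(rootAt q (-(n : ℤ)), y), by have h2 := hy.2; show (-(n : ℤ)) + y.k = 0; omega⟩



/-- Elements of the lamplighter group `Γ = ℤ_q ≀ ℤ`: pairs `(η,k)` with `η`
finitely supported. -/
structure LP (q : ℕ) where
  η : ℤ → ZMod q
  k : ℤ
  fin : (Function.support η).Finite

/-- The identity element `e = (0,0)` of `ℤ_q ≀ ℤ`. -/
def eLP (q : ℕ) : LP q := ⟨fun _ => 0, 0, by simp⟩

/-- Multiplication in `ℤ_q ≀ ℤ`: `(η,k)(η',k') = (η + η'(· − k), k + k')`. -/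
def lmul {q : ℕ} (g h : LP q) : LP q where
  η := fun n => g.η n + h.η (n - g.k)
  k := g.k + h.k
  fin := by
    have hinj : Function.Injective (fun n : ℤ => n - g.k) := sub_left_injective
    apply Set.Finite.subset (Set.Finite.union g.fin (h.fin.preimage hinj.injOn))
    intro n hn
    simp only [Function.mem_support] at hn
    by_cases h1 : g.η n = 0
    · right
      simp only [Set.mem_preimage, Function.mem_support]
      intro h2
      exact hn (by rw [h1, h2, add_zero])
    · left; exact h1

/-- The configuration `δ_j^ℓ` with value `ℓ` at `j` and `0` elsewhere. -/
def deltaCfg (q : ℕ) (j : ℤ) (ℓ : ZMod q) : ℤ → ZMod q := fun n => if n = j then ℓ else 0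

/-- The group element `(δ_j^ℓ, k) ∈ ℤ_q ≀ ℤ`. -/
def deltaLP (q : ℕ) (j : ℤ) (ℓ : ZMod q) (k : ℤ) : LP q :=
  ⟨deltaCfg q j ℓ, k, by
    apply Set.Finite.subset (Set.finite_singleton j)
    intro n hn
    simp only [Function.mem_support, deltaCfg] at hn
    by_cases h : n = j
    · simpa using h
    · simp [h] at hn⟩


/-- Adjacency in the tree `T_q`: one vertex is the predecessor of the other. -/
def adjT {q : ℕ} (x y : TV q) : Prop := pred x = y ∨ pred y = x

/-- Adjacency in `DL(q,r)`. -/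
def adjDL {q r : ℕ} (x y : DL q r) : Prop :=
  adjT x.val.1 y.val.1 ∧ adjT x.val.2 y.val.2

/-- The identification `Φ : ℤ_q ≀ ℤ → DL(q,q)`, `Φ(η,k) = (η_k⁻,k)(η_k⁺,-k)`. -/
def Phi (q : ℕ) (g : LP q) : DL q q :=
  ⟨(⟨fun n => if n ≤ 0 then g.η (g.k + n) else 0, g.k,
      fin_aux g.η g.fin (fun n => g.k + n) (add_right_injective g.k),
      fun n hn => by simp [not_le.mpr hn]⟩,
    ⟨fun n => if n ≤ 0 then g.η (g.k + 1 - n) else 0, -g.k,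
      fin_aux g.η g.fin (fun n => g.k + 1 - n) sub_right_injective,
      fun n hn => by simp [not_le.mpr hn]⟩),
   by show g.k + -g.k = 0; omega⟩

/-- The transition matrix `Q_α` of the switch–walk–switch walk on `DL^s(q,r)`. -/
def qDL (q r : ℕ) (α : ℝ) (x y : DL q r) : ℝ :=
  if pred (pred y.val.1) = pred x.val.1 ∧ y.val.2 = pred x.val.2 then α / ((q : ℝ) ^ 2)
  else if pred y.val.1 = pred (pred x.val.1) ∧ pred y.val.2 = x.val.2 then
    (1 - α) / ((q : ℝ) * (r : ℝ))
  else 0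

/-- The horocyclic product `D'` of `T_q` and `T_r` at level sum `-1`. -/
def DL' (q r : ℕ) := {x : TV q × TV r // x.1.k + x.2.k = -1}

/-- The transition matrix `P'` on `D'` (same rule as `P_α`). -/
def pDL' (q r : ℕ) (α : ℝ) (x y : DL' q r) : ℝ :=
  if pred y.val.1 = x.val.1 ∧ y.val.2 = pred x.val.2 then α / (q : ℝ)
  else if y.val.1 = pred x.val.1 ∧ pred y.val.2 = x.val.2 then (1 - α) / (r : ℝ)
  else 0

/-- The map `x₁x₂ ↦ x₁⁻x₂` from `DL^s(q,r)` onto `D'`. -/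
def toDL' {q r : ℕ} (x : DL q r) : DL' q r :=
  ⟨(pred x.val.1, x.val.2), by
    have h := x.property; show x.val.1.k - 1 + x.val.2.k = -1; omega⟩

/-- Harmonicity for the simple ("walk forward and switch, or switch and walk
backward") lamplighter walk on `ℤ_q ≀ ℤ`, whose law is uniform on
`{(δ₁^ℓ,1), (δ₀^ℓ,-1) : ℓ ∈ ZMod q}`. -/
def SRWHarmonic (q : ℕ) [NeZero q] (h : LP q → ℝ) : Prop :=
  ∀ g : LP q,
    (∑ ℓ : ZMod q, (h (lmul g (deltaLP q 1 ℓ 1)) + h (lmul g (deltaLP q 0 ℓ (-1)))))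
      / (2 * (q : ℝ)) = h g

/-- The step `(δ₀^ℓ + δ₁^m, 1)` of the switch–walk–switch walk. -/
def swsStepP (q : ℕ) (ℓ m : ZMod q) : LP q :=
  ⟨fun n => if n = 0 then ℓ else if n = 1 then m else 0, 1, by
    apply Set.Finite.subset ((Set.finite_singleton 1).insert (0:ℤ))
    intro n hn
    simp only [Function.mem_support] at hn
    by_cases h0 : n = 0
    · simp [h0]
    · by_cases h1 : n = 1
      · simp [h1]
      · simp [h0, h1] at hn⟩

/-- The step `(δ₀^ℓ + δ_{-1}^m, -1)` of the switch–walk–switch walk. -/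
def swsStepM (q : ℕ) (ℓ m : ZMod q) : LP q :=
  ⟨fun n => if n = 0 then ℓ else if n = -1 then m else 0, -1, by
    apply Set.Finite.subset ((Set.finite_singleton (-1:ℤ)).insert (0:ℤ))
    intro n hn
    simp only [Function.mem_support] at hn
    by_cases h0 : n = 0
    · simp [h0]
    · by_cases h1 : n = (-1 : ℤ)
      · simp [h1]
      · simp [h0, h1] at hn⟩

/-- Harmonicity for the switch–walk–switch lamplighter walk on `ℤ_q ≀ ℤ`, whose law
is uniform on `{(δ₀^ℓ + δ₁^m, 1), (δ₀^ℓ + δ_{-1}^m, -1) : ℓ, m ∈ ZMod q}`. -/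
def SWSHarmonic (q : ℕ) [NeZero q] (h : LP q → ℝ) : Prop :=
  ∀ g : LP q,
    (∑ ℓ : ZMod q, ∑ m : ZMod q,
        (h (lmul g (swsStepP q ℓ m)) + h (lmul g (swsStepM q ℓ m))))
      / (2 * (q : ℝ) ^ 2) = h g

/-- The positive defect `df⁺((η,k),ξ₁)`. -/
def dfPlus (q : ℕ) (g : LP q) (ξ : ℤ → ZMod q) : ℤ :=
  sInf ({n : ℤ | n ≤ g.k ∧ ξ (n + 1) ≠ g.η (n + 1)} ∪ {g.k}) -
    sInf ({m : ℤ | m ≤ 0 ∧ ξ (m + 1) ≠ 0} ∪ {0})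

/-- The negative defect `df⁻((η,k),ξ₂)`. -/
def dfMinus (q : ℕ) (g : LP q) (ξ : ℤ → ZMod q) : ℤ :=
  sSup ({m : ℤ | 0 < m ∧ ξ m ≠ 0} ∪ {0}) -
    sSup ({n : ℤ | g.k < n ∧ ξ n ≠ g.η n} ∪ {g.k})

/-- The defect `df⊕((η,k),ξ₁)` for the switch–walk–switch walk. -/
def dfOPlus (q : ℕ) (g : LP q) (ξ : ℤ → ZMod q) : ℤ :=
  sInf ({n : ℤ | n ≤ g.k ∧ ξ n ≠ g.η n} ∪ {g.k}) -
    sInf ({m : ℤ | m ≤ 0 ∧ ξ m ≠ 0} ∪ {0})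

lemma TV.ext' {q : ℕ} {x y : TV q} (h1 : x.σ = y.σ) (h2 : x.k = y.k) : x = y := by
  cases x; cases y; simp_all

/-- The `ℓ`-th successor of a vertex of `T_q`. -/
def succV {q : ℕ} (x : TV q) (ℓ : ZMod q) : TV q where
  σ := fun n => if n = 0 then ℓ else if n ≤ 0 then x.σ (n + 1) else 0
  k := x.k + 1
  fin := by
    have hsub : (Function.support fun n : ℤ =>
        if n = 0 then ℓ else if n ≤ 0 then x.σ (n + 1) else 0)
        ⊆ insert 0 ((fun n : ℤ => n + 1) ⁻¹' Function.support x.σ) := by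
      intro n hn
      simp only [Function.mem_support] at hn
      by_cases h0 : n = 0
      · simp [h0]
      · by_cases hle : n ≤ 0
        · right
          simp only [Set.mem_preimage, Function.mem_support]
          intro hc
          simp [h0, hle, hc] at hn
        · simp [h0, hle] at hn
    exact Set.Finite.subset ((x.fin.preimage (add_left_injective 1).injOn).insert 0) hsub
  upz := fun n hn => by
    have h0 : ¬ n = 0 := by omega
    have hle : ¬ n ≤ 0 := by omega
    simp [h0, hle]

lemma pred_succV {q : ℕ} (x : TV q) (ℓ : ZMod q) : pred (succV x ℓ) = x := by
  apply TV.ext'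
  · funext n
    show (if n ≤ 0 then (succV x ℓ).σ (n - 1) else 0) = x.σ n
    by_cases hle : n ≤ 0
    · have h1 : ¬ (n - 1 = 0) := by omega
      have h2 : n - 1 ≤ 0 := by omega
      simp [succV, hle, h1, h2]
    · simp [hle, x.upz n (by omega)]
  · show x.k + 1 - 1 = x.k
    ring

lemma eq_succV_of_pred {q : ℕ} {x z : TV q} (h : pred z = x) : z = succV x (z.σ 0) := by
  subst h
  apply TV.ext'
  · funext n
    show z.σ n = if n = 0 then z.σ 0 else if n ≤ 0 then (pred z).σ (n + 1) else 0
    by_cases h0 : n = 0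
    · simp [h0]
    · by_cases hle : n ≤ 0
      · have h1 : n + 1 ≤ 0 := by omega
        simp only [h0, if_false, hle, if_true]
        show z.σ n = if n + 1 ≤ 0 then z.σ (n + 1 - 1) else 0
        simp [h1]
      · simp [h0, hle, z.upz n (by omega)]
  · show z.k = z.k - 1 + 1
    ring

lemma succV_injective {q : ℕ} (x : TV q) : Function.Injective (succV x) := by
  intro a b h
  have := congrArg (fun z : TV q => z.σ 0) h
  simpa [succV] using this

lemma succV_k {q : ℕ} (x : TV q) (ℓ : ZMod q) : (succV x ℓ).k = x.k + 1 := rfl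
lemma pred_k {q : ℕ} (x : TV q) : (pred x).k = x.k - 1 := rfl

lemma pred_pred_ne {q : ℕ} (x : TV q) : pred (pred x) ≠ x := by
  intro h
  have := congrArg TV.k h
  simp only [pred_k] at this
  omega

lemma succV_ne_pred {q : ℕ} (x : TV q) (ℓ : ZMod q) : succV x ℓ ≠ pred x := by
  intro h
  have := congrArg TV.k h
  simp only [succV_k, pred_k] at this
  omega

lemma tsum_p1 (q : ℕ) [NeZero q] (α : ℝ) (h : TV q → ℝ) (x : TV q) :
    ∑' y, p1 q α x y * h y
      = (1 - α) * h (pred x) + ∑ ℓ : ZMod q, (α / (q : ℝ)) * h (succV x ℓ) := by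
  classical
  have hs : ∀ y ∉ insert (pred x) (Finset.image (succV x) Finset.univ),
      p1 q α x y * h y = 0 := by
    intro y hy
    simp only [Finset.mem_insert, Finset.mem_image, Finset.mem_univ, true_and] at hy
    push_neg at hy
    have h1 : ¬ pred y = x := fun hc => hy.2 (y.σ 0) (eq_succV_of_pred hc).symm
    simp [p1, h1, hy.1]
  rw [tsum_eq_sum hs, Finset.sum_insert, Finset.sum_image
    (fun a _ b _ hab => succV_injective x hab)]
  · congr 1
    · simp [p1, pred_pred_ne x]
    · apply Finset.sum_congr rfl
      intro ℓ _
      simp [p1, pred_succV]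
  · simp only [Finset.mem_image, Finset.mem_univ, true_and, not_exists]
    exact fun ℓ => succV_ne_pred x ℓ

lemma tsum_p2 (r : ℕ) [NeZero r] (α : ℝ) (h : TV r → ℝ) (x : TV r) :
    ∑' y, p2 r α x y * h y
      = α * h (pred x) + ∑ m : ZMod r, ((1 - α) / (r : ℝ)) * h (succV x m) := by
  classical
  have hs : ∀ y ∉ insert (pred x) (Finset.image (succV x) Finset.univ),
      p2 r α x y * h y = 0 := by
    intro y hy
    simp only [Finset.mem_insert, Finset.mem_image, Finset.mem_univ, true_and] at hy
    push_neg at hy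
    have h1 : ¬ pred y = x := fun hc => hy.2 (y.σ 0) (eq_succV_of_pred hc).symm
    simp [p2, h1, hy.1]
  rw [tsum_eq_sum hs, Finset.sum_insert, Finset.sum_image
    (fun a _ b _ hab => succV_injective x hab)]
  · congr 1
    · simp [p2]
    · apply Finset.sum_congr rfl
      intro m _
      have h1 : succV x m ≠ pred x := succV_ne_pred x m
      simp [p2, pred_succV, h1]
  · simp only [Finset.mem_image, Finset.mem_univ, true_and, not_exists]
    exact fun m => succV_ne_pred x m

/-- The neighbour `(succV x₁ ℓ, pred x₂)` of `x` in `DL(q,r)`. -/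
def uA {q r : ℕ} (x : DL q r) (ℓ : ZMod q) : DL q r :=
  ⟨(succV x.val.1 ℓ, pred x.val.2), by
    have h := x.property
    show x.val.1.k + 1 + (x.val.2.k - 1) = 0
    omega⟩

/-- The neighbour `(pred x₁, succV x₂ m)` of `x` in `DL(q,r)`. -/
def uB {q r : ℕ} (x : DL q r) (m : ZMod r) : DL q r :=
  ⟨(pred x.val.1, succV x.val.2 m), by
    have h := x.property
    show x.val.1.k - 1 + (x.val.2.k + 1) = 0
    omega⟩

lemma uA_injective {q r : ℕ} (x : DL q r) : Function.Injective (uA x) := by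
  intro a b h
  have := congrArg (fun z : DL q r => z.val.1) h
  exact succV_injective _ this

lemma uB_injective {q r : ℕ} (x : DL q r) : Function.Injective (uB x) := by
  intro a b h
  have := congrArg (fun z : DL q r => z.val.2) h
  exact succV_injective _ this

lemma uA_ne_uB {q r : ℕ} (x : DL q r) (ℓ : ZMod q) (m : ZMod r) : uA x ℓ ≠ uB x m := by
  intro h
  have := congrArg (fun z : DL q r => z.val.1.k) h
  simp only [uA, uB, succV_k, pred_k] at this
  omega

lemma tsum_pDL (q r : ℕ) [NeZero q] [NeZero r] (α : ℝ) (H : DL q r → ℝ) (x : DL q r) :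
    ∑' y, pDL q r α x y * H y
      = (∑ ℓ : ZMod q, (α / (q : ℝ)) * H (uA x ℓ))
        + ∑ m : ZMod r, ((1 - α) / (r : ℝ)) * H (uB x m) := by
  classical
  set s : Finset (DL q r) :=
    Finset.image (uA x) Finset.univ ∪ Finset.image (uB x) Finset.univ with hsdef
  have hs : ∀ y ∉ s, pDL q r α x y * H y = 0 := by
    intro y hy
    simp only [hsdef, Finset.mem_union, Finset.mem_image, Finset.mem_univ, true_and] at hy
    push_neg at hy
    have h1 : ¬ (pred y.val.1 = x.val.1 ∧ y.val.2 = pred x.val.2) := by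
      rintro ⟨ha, hb⟩
      refine hy.1 (y.val.1.σ 0) ?_
      apply Subtype.ext
      exact Prod.ext (eq_succV_of_pred ha).symm hb.symm
    have h2 : ¬ (y.val.1 = pred x.val.1 ∧ pred y.val.2 = x.val.2) := by
      rintro ⟨ha, hb⟩
      refine hy.2 (y.val.2.σ 0) ?_
      apply Subtype.ext
      exact Prod.ext ha.symm (eq_succV_of_pred hb).symm
    simp [pDL, h1, h2]
  rw [tsum_eq_sum hs, hsdef, Finset.sum_union, Finset.sum_image
    (fun a _ b _ hab => uA_injective x hab), Finset.sum_image
    (fun a _ b _ hab => uB_injective x hab)]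
  · congr 1
    · apply Finset.sum_congr rfl
      intro ℓ _
      have hcond : pred (uA x ℓ).val.1 = x.val.1 ∧ (uA x ℓ).val.2 = pred x.val.2 :=
        ⟨pred_succV _ _, rfl⟩
      simp [pDL, hcond]
    · apply Finset.sum_congr rfl
      intro m _
      have h1 : ¬ (pred (uB x m).val.1 = x.val.1 ∧ (uB x m).val.2 = pred x.val.2) := by
        rintro ⟨ha, -⟩
        exact pred_pred_ne x.val.1 ha
      have hcond : (uB x m).val.1 = pred x.val.1 ∧ pred (uB x m).val.2 = x.val.2 :=
        ⟨rfl, pred_succV _ _⟩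
      simp only [pDL]
      rw [if_neg h1, if_pos hcond]
  · rw [Finset.disjoint_left]
    intro a ha hb
    simp only [Finset.mem_image, Finset.mem_univ, true_and] at ha hb
    obtain ⟨ℓ, rfl⟩ := ha
    obtain ⟨m, hm⟩ := hb
    exact uA_ne_uB x ℓ m hm.symm
/-- lifting harmonic functions from the two trees to `DL(q,r)`. -/
theorem lift_harmonic (q r : ℕ) (hq : 2 ≤ q) (hr : 2 ≤ r) (α : ℝ) (hα0 : 0 < α)
    (hα1 : α < 1) :
    (∀ h₁ : TV q → ℝ, IsHarmonic (p1 q α) h₁ →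
        IsHarmonic (pDL q r α) fun x : DL q r => h₁ x.val.1) ∧
    (∀ h₂ : TV r → ℝ, IsHarmonic (p2 r α) h₂ →
        IsHarmonic (pDL q r α) fun x : DL q r => h₂ x.val.2) := by
  haveI : NeZero q := ⟨by omega⟩
  haveI : NeZero r := ⟨by omega⟩
  have hq0 : (q : ℝ) ≠ 0 := Nat.cast_ne_zero.mpr (by omega)
  have hr0 : (r : ℝ) ≠ 0 := Nat.cast_ne_zero.mpr (by omega)
  constructor
  · intro h₁ hh₁ x
    show ∑' y : DL q r, pDL q r α x y * h₁ y.val.1 = h₁ x.val.1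
    rw [tsum_pDL]
    have hx := hh₁ x.val.1
    rw [tsum_p1] at hx
    have hA : ∀ ℓ : ZMod q, (uA x ℓ).val.1 = succV x.val.1 ℓ := fun _ => rfl
    have hBv : ∀ m : ZMod r, (uB x m).val.1 = pred x.val.1 := fun _ => rfl
    have hB : ∑ m : ZMod r, ((1 - α) / (r : ℝ)) * h₁ (uB x m).val.1
        = (1 - α) * h₁ (pred x.val.1) := by
      simp only [hBv]
      rw [Finset.sum_const, nsmul_eq_mul, Finset.card_univ, ZMod.card r]
      field_simp
    simp only [hA]
    rw [hB]
    linarith [hx]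
  · intro h₂ hh₂ x
    show ∑' y : DL q r, pDL q r α x y * h₂ y.val.2 = h₂ x.val.2
    rw [tsum_pDL]
    have hx := hh₂ x.val.2
    rw [tsum_p2] at hx
    have hBv : ∀ m : ZMod r, (uB x m).val.2 = succV x.val.2 m := fun _ => rfl
    have hAv : ∀ ℓ : ZMod q, (uA x ℓ).val.2 = pred x.val.2 := fun _ => rfl
    have hA : ∑ ℓ : ZMod q, (α / (q : ℝ)) * h₂ (uA x ℓ).val.2
        = α * h₂ (pred x.val.2) := by
      simp only [hAv]
      rw [Finset.sum_const, nsmul_eq_mul, Finset.card_univ, ZMod.card q]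
      field_simp
    simp only [hBv]
    rw [hA]
    linarith [hx]

end LampDL
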